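/- arXiv:1510.07379 — 3 statements merged into one kernel-verified Lean document; each statement's English description precedes it below -/
import Mathlib

section
/- Let A ∈ ℂ^{n×N} satisfy A A^* = I_n, let x0 ∈ ℂ^n, b = |A^* x0|, and let X ⊆ ℂ^n be a nonempty closed convex set (for the real inner-product structure) with nearest-point projection P_X. Define the alternating-projection iterates x^{(k+1)} = P_X(A(b ⊙ phase(A^* x^{(k)}))) starting from any x^{(1)} ∈ X. Then for every k ≥ 1 one has F(x^{(k)}) − F(x^{(k+1)}) ≥ (1/2) ‖x^{(k+1)} − x^{(k)}‖²; in particular the sequence F(x^{(1)}), F(x^{(2)}), … is nonincreasing. -/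
/-- `phase z = z/|z|`, with the convention `phase 0 = 1`. -/
noncomputable def phase (z : ℂ) : ℂ := if z = 0 then 1 else z / ‖z‖

lemma abs_phase (z : ℂ) : ‖phase z‖ = 1 := by
  unfold phase
  split
  · simp
  · rename_i h
    rw [norm_div, Complex.norm_real, norm_norm,
      div_self (norm_ne_zero_iff.mpr h)]

lemma normSq_sub_phase (z : ℂ) {b : ℝ} (hb : 0 ≤ b) :
    Complex.normSq (z - (b : ℂ) * phase z) = (‖z‖ - b)^2 := by
  by_cases h : z = 0
  · simp [phase, h, Complex.normSq_ofReal]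
    ring
  · have hz : ((‖z‖ : ℝ) : ℂ) ≠ 0 := by
      simpa using norm_ne_zero_iff.mpr h
    have key : z - (b : ℂ) * phase z = ((‖z‖ - b : ℝ) : ℂ) * phase z := by
      simp only [phase, if_neg h]
      field_simp
      push_cast
      ring
    rw [key, map_mul, Complex.normSq_ofReal]
    have : Complex.normSq (phase z) = 1 := by
      rw [← Complex.sq_norm, abs_phase]; norm_num
    rw [this, mul_one]
    ring

lemma normSq_sub_phase_ge (z w : ℂ) {b : ℝ} (hb : 0 ≤ b) :
    (‖z‖ - b)^2 ≤ Complex.normSq (z - (b : ℂ) * phase w) := by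
  have h1 : |‖z‖ - b| ≤ ‖z - (b : ℂ) * phase w‖ := by
    have := abs_norm_sub_norm_le z ((b : ℂ) * phase w)
    rwa [norm_mul, Complex.norm_real, Real.norm_eq_abs, abs_phase, mul_one, abs_of_nonneg hb] at this
  calc (‖z‖ - b)^2 = |‖z‖ - b|^2 := (sq_abs _).symm
    _ ≤ ‖z - (b : ℂ) * phase w‖^2 := by
        exact pow_le_pow_left₀ (abs_nonneg _) h1 2
    _ = Complex.normSq (z - (b : ℂ) * phase w) := Complex.sq_norm _

/-- Obtuse-angle / Pythagoras inequality for a nearest-point map on a convex set. -/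
lemma proj_ineq {E : Type*} [NormedAddCommGroup E] [InnerProductSpace ℝ E] {X : Set E}
    (hXconv : Convex ℝ X) {y p z : E} (hp : p ∈ X) (hz : z ∈ X)
    (hmin : ∀ w ∈ X, ‖y - p‖ ≤ ‖y - w‖) :
    ‖p - y‖^2 + ‖z - p‖^2 ≤ ‖z - y‖^2 := by
  haveI : Nonempty X := ⟨⟨p, hp⟩⟩
  have hinf : ‖y - p‖ = ⨅ w : X, ‖y - w‖ := by
    apply le_antisymm
    · exact le_ciInf fun w => hmin w w.2
    · have hbdd : BddBelow (Set.range fun w : X => ‖y - (w : E)‖) := by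
        refine ⟨0, ?_⟩
        rintro r ⟨w, rfl⟩
        exact norm_nonneg _
      exact ciInf_le hbdd ⟨p, hp⟩
  have h := (norm_eq_iInf_iff_real_inner_le_zero hXconv hp).1 hinf z hz
  have hsymm : (inner ℝ (z - p) (y - p) : ℝ) ≤ 0 := by
    rwa [real_inner_comm]
  have expand : ‖z - y‖^2 = ‖z - p‖^2 - 2 * (inner ℝ (z - p) (y - p) : ℝ) + ‖y - p‖^2 := by
    have : z - y = (z - p) - (y - p) := by abel
    rw [this, norm_sub_sq_real]
  have hnn : ‖y - p‖ ^ 2 = ‖p - y‖ ^ 2 := by rw [norm_sub_rev]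
  linarith

/-- sufficient decrease of the alternating-projection iteration
`x^(k+1) = P_X (A (b ⊙ phase (A^* x^(k))))` for an isometric `A^*` (expressed as the
Parseval frame condition on the columns `a j` of `A`): for every `k ≥ 1`,
`F(x^(k)) - F(x^(k+1)) ≥ (1/2) ‖x^(k+1) - x^(k)‖²`; in particular `F(x^(k))` is
nonincreasing. -/
theorem AP_sufficient_decrease {n N : ℕ} (a : Fin N → EuclideanSpace ℂ (Fin n))
    (hiso : ∀ x : EuclideanSpace ℂ (Fin n), ∑ j, (inner ℂ (a j) x : ℂ) • a j = x)
    (x0 : EuclideanSpace ℂ (Fin n))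
    (b : Fin N → ℝ) (hb : ∀ j, b j = ‖(inner ℂ (a j) x0 : ℂ)‖)
    (F : EuclideanSpace ℂ (Fin n) → ℝ)
    (hF : ∀ x, F x = (1/2) * ∑ j, (‖(inner ℂ (a j) x : ℂ)‖ - b j)^2)
    (X : Set (EuclideanSpace ℂ (Fin n))) (hXne : X.Nonempty)
    (hXc : IsClosed X) (hXconv : Convex ℝ X)
    (P : EuclideanSpace ℂ (Fin n) → EuclideanSpace ℂ (Fin n))
    (hP : ∀ y, P y ∈ X ∧ ∀ z ∈ X, ‖y - P y‖ ≤ ‖y - z‖)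
    (x : ℕ → EuclideanSpace ℂ (Fin n)) (hx1 : x 1 ∈ X)
    (hrec : ∀ k ≥ 1, x (k+1) =
      P (∑ j, ((b j : ℂ) * phase (inner ℂ (a j) (x k) : ℂ)) • a j)) :
    (∀ k ≥ 1, F (x k) - F (x (k+1)) ≥ (1/2) * ‖x (k+1) - x k‖^2) ∧
      (∀ k ≥ 1, F (x (k+1)) ≤ F (x k)) := by
  have hbn : ∀ j, 0 ≤ b j := fun j => (hb j) ▸ norm_nonneg _
  -- Parseval identity
  have hParseval : ∀ u : EuclideanSpace ℂ (Fin n),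
      ∑ j, Complex.normSq (inner ℂ (a j) u : ℂ) = ‖u‖^2 := by
    intro u
    have h1 : (inner ℂ u (∑ j, (inner ℂ (a j) u : ℂ) • a j) : ℂ) = inner ℂ u u := by rw [hiso]
    rw [inner_sum] at h1
    simp_rw [inner_smul_right] at h1
    have h2 : ∀ j : Fin N, (inner ℂ (a j) u : ℂ) * (inner ℂ u (a j) : ℂ)
        = (Complex.normSq (inner ℂ (a j) u : ℂ) : ℂ) := by
      intro j
      rw [← inner_conj_symm u (a j), Complex.mul_conj]
    rw [Finset.sum_congr rfl (fun j _ => h2 j), inner_self_eq_norm_sq_to_K] at h1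
    have h1' : ∑ j, ((Complex.normSq (inner ℂ (a j) u : ℂ) : ℝ) : ℂ)
        = (((‖u‖ : ℝ) : ℂ))^2 := h1
    exact_mod_cast h1'
  -- membership
  have hmem : ∀ k, x (k+1) ∈ X := by
    intro k
    induction k with
    | zero => exact hx1
    | succ m ih =>
      rw [hrec (m+1) (by omega)]
      exact (hP _).1
  have hmem' : ∀ k, 1 ≤ k → x k ∈ X := by
    intro k hk
    obtain ⟨m, rfl⟩ := Nat.exists_eq_add_of_le hk
    rw [Nat.add_comm]
    exact hmem m
  have key : ∀ k ≥ 1, F (x k) - F (x (k+1)) ≥ (1/2) * ‖x (k+1) - x k‖^2 := by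
    intro k hk
    set xk := x k with hxk
    set c : Fin N → ℂ := fun j => (b j : ℂ) * phase (inner ℂ (a j) xk : ℂ) with hc
    set y := ∑ j, c j • a j with hy
    have hx2 : x (k+1) = P y := hrec k hk
    -- expansion of the surrogate
    have hexp : ∀ u : EuclideanSpace ℂ (Fin n),
        ∑ j, Complex.normSq ((inner ℂ (a j) u : ℂ) - c j)
          = ‖u - y‖^2 + (∑ j, Complex.normSq (c j) - ‖y‖^2) := by
      intro u
      have hyu : (inner ℂ y u : ℂ) = ∑ j, (inner ℂ (a j) u : ℂ) * (starRingEnd ℂ) (c j) := by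
        rw [hy, sum_inner]
        exact Finset.sum_congr rfl fun j _ => by rw [inner_smul_left]; ring
      have hre : (∑ j, ((inner ℂ (a j) u : ℂ) * (starRingEnd ℂ) (c j))).re
          = Complex.re (inner ℂ u y : ℂ) := by
        rw [← hyu, ← inner_conj_symm u y, Complex.conj_re]
      have hterm : ∀ j : Fin N, Complex.normSq ((inner ℂ (a j) u : ℂ) - c j)
          = Complex.normSq (inner ℂ (a j) u : ℂ) + Complex.normSq (c j)
            - 2 * ((inner ℂ (a j) u : ℂ) * (starRingEnd ℂ) (c j)).re := by
        intro j
        exact Complex.normSq_sub _ _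
      rw [Finset.sum_congr rfl (fun j _ => hterm j)]
      have hns : ‖u - y‖^2 = ‖u‖^2 - 2 * Complex.re (inner ℂ u y : ℂ) + ‖y‖^2 :=
        @norm_sub_sq ℂ _ _ _ _ u y
      have hsum : ∑ j, (Complex.normSq (inner ℂ (a j) u : ℂ) + Complex.normSq (c j)
            - 2 * ((inner ℂ (a j) u : ℂ) * (starRingEnd ℂ) (c j)).re)
          = ∑ j, Complex.normSq (inner ℂ (a j) u : ℂ) + ∑ j, Complex.normSq (c j)
            - 2 * (∑ j, ((inner ℂ (a j) u : ℂ) * (starRingEnd ℂ) (c j))).re := by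
        rw [Finset.sum_sub_distrib, Finset.sum_add_distrib, Complex.re_sum, Finset.mul_sum]
      rw [hsum, hParseval u, hre]
      linarith [hns]
    set D := ∑ j, Complex.normSq (c j) - ‖y‖^2 with hD
    -- value of F at x k
    have hFk : F xk = (1/2) * (‖xk - y‖^2 + D) := by
      rw [hF]
      have : ∑ j, (‖(inner ℂ (a j) xk : ℂ)‖ - b j)^2
          = ∑ j, Complex.normSq ((inner ℂ (a j) xk : ℂ) - c j) :=
        Finset.sum_congr rfl fun j _ => (normSq_sub_phase _ (hbn j)).symm
      rw [this, hexp xk]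
    -- bound on F at x (k+1)
    have hFk1 : F (x (k+1)) ≤ (1/2) * (‖x (k+1) - y‖^2 + D) := by
      rw [hF]
      have hle : ∑ j, (‖(inner ℂ (a j) (x (k+1)) : ℂ)‖ - b j)^2
          ≤ ∑ j, Complex.normSq ((inner ℂ (a j) (x (k+1)) : ℂ) - c j) :=
        Finset.sum_le_sum fun j _ => normSq_sub_phase_ge _ _ (hbn j)
      rw [hexp (x (k+1))] at hle
      linarith
    -- projection inequality
    have hproj : ‖P y - y‖^2 + ‖xk - P y‖^2 ≤ ‖xk - y‖^2 :=
      proj_ineq hXconv (hP y).1 (hmem' k hk) (hP y).2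
    rw [hx2] at hFk1 ⊢
    have h1 : ‖P y - xk‖ ^ 2 = ‖xk - P y‖ ^ 2 := by rw [norm_sub_rev]
    linarith
  refine ⟨key, fun k hk => ?_⟩
  have h := key k hk
  nlinarith [sq_nonneg ‖x (k+1) - x k‖, h]
end

section
/- Let n ≥ 2, m ≥ 1, and M ∈ ℂ^{m×n}. Let x0 ∈ ℂ^n with ‖x0‖ = 1, and let x_null ∈ ℂ^n be a unit vector minimizing ‖M x‖ over all x ∈ ℂ^n with ‖x‖ = 1, phase-adjusted so that x0^* x_null is a nonnegative real number. Then there exists x_⊥ ∈ ℂ^n with ‖x_⊥‖ = 1 and x0^* x_⊥ = 0 such that (1/4) · ‖x0 x0^* − x_null x_null^*‖_F² · ‖M x_⊥‖² ≤ ‖M x0‖², where ‖·‖_F is the Frobenius norm on n×n complex matrices (note ‖x0 x0^* − x_null x_null^*‖_F² = 2 − 2 |x0^* x_null|²). -/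
open scoped ComplexConjugate
open Finset

local notation "⟪" x ", " y "⟫" => @inner ℂ _ _ x y

lemma quad_coeff_zero (α β : ℝ) (hα : 0 ≤ α)
    (h : ∀ t : ℝ, 0 ≤ 2 * t * β + t ^ 2 * α) : β = 0 := by
  have hpos : (0:ℝ) < α + 1 := by linarith
  have h1 := h (-β / (α + 1))
  have heq : 2 * (-β / (α + 1)) * β + (-β / (α + 1)) ^ 2 * α
      = -(β ^ 2 * (α + 2)) / (α + 1) ^ 2 := by
    field_simp
    ring
  rw [heq] at h1
  have h2 : β ^ 2 * (α + 2) ≤ 0 := by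
    rcases div_nonneg_iff.mp h1 with ⟨h3, _⟩ | ⟨_, h4⟩
    · linarith
    · nlinarith [sq_nonneg (α+1)]
  nlinarith [sq_nonneg β]

lemma min_orth {n m : ℕ}
    (M : EuclideanSpace ℂ (Fin n) →ₗ[ℂ] EuclideanSpace ℂ (Fin m))
    (xnull : EuclideanSpace ℂ (Fin n)) (hxnull : ‖xnull‖ = 1)
    (hmin : ∀ x : EuclideanSpace ℂ (Fin n), ‖x‖ = 1 → ‖M xnull‖ ≤ ‖M x‖)
    (w : EuclideanSpace ℂ (Fin n)) (hw : ‖w‖ = 1) (hwo : ⟪xnull, w⟫ = 0) :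
    ⟪M xnull, M w⟫ = (0:ℂ) := by
  have re_zero : ∀ w : EuclideanSpace ℂ (Fin n), ‖w‖ = 1 → ⟪xnull, w⟫ = 0 →
      (⟪M xnull, M w⟫ : ℂ).re = 0 := by
    intro w hw hwo
    set r : ℂ := ⟪M xnull, M w⟫ with hr
    have hAB : ‖M xnull‖^2 ≤ ‖M w‖^2 := by
      have := hmin w hw
      nlinarith [norm_nonneg (M xnull), norm_nonneg (M w)]
    apply quad_coeff_zero (‖M w‖^2 - ‖M xnull‖^2) _ (by linarith)
    intro t
    set v := xnull + (t : ℂ) • w with hv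
    have hvnorm : ‖v‖ ^ 2 = 1 + t ^ 2 := by
      rw [hv, norm_add_sq (𝕜 := ℂ), inner_smul_right, hwo, norm_smul, hxnull, hw]
      simp [Complex.norm_real, sq_abs]
    have h4 : ‖M v‖ ^ 2 = ‖M xnull‖^2 + 2 * t * r.re + t ^ 2 * ‖M w‖^2 := by
      rw [hv, map_add, map_smul, norm_add_sq (𝕜 := ℂ), inner_smul_right, norm_smul, ← hr]
      simp [Complex.norm_real, sq_abs]
      rw [mul_pow, sq_abs]
      ring
    have hvpos : 0 < ‖v‖ := by nlinarith [norm_nonneg v]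
    have hunit : ‖((‖v‖ : ℂ))⁻¹ • v‖ = 1 := by
      rw [norm_smul]
      simp [hvpos.ne']
    have h1 := hmin _ hunit
    rw [map_smul, norm_smul] at h1
    have h2 : ‖M xnull‖ * ‖v‖ ≤ ‖M v‖ := by
      have hn : ‖((‖v‖ : ℂ))⁻¹‖ = ‖v‖⁻¹ := by simp
      rw [hn] at h1
      calc ‖M xnull‖ * ‖v‖ ≤ (‖v‖⁻¹ * ‖M v‖) * ‖v‖ :=
            mul_le_mul_of_nonneg_right h1 (norm_nonneg v)
        _ = ‖M v‖ := by field_simp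
    have h3 : ‖M xnull‖^2 * (1 + t ^ 2) ≤ ‖M v‖ ^ 2 := by
      rw [← hvnorm]
      calc ‖M xnull‖^2 * ‖v‖^2 = (‖M xnull‖ * ‖v‖)^2 := by ring
        _ ≤ ‖M v‖ ^ 2 := by
            nlinarith [norm_nonneg (M v), mul_nonneg (norm_nonneg (M xnull)) (norm_nonneg v)]
    nlinarith [h3, h4]
  have him : (⟪M xnull, M w⟫ : ℂ).im = 0 := by
    have hw' : ‖(Complex.I • w : EuclideanSpace ℂ (Fin n))‖ = 1 := by
      rw [norm_smul]; simp [hw]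
    have hwo' : ⟪xnull, (Complex.I • w : EuclideanSpace ℂ (Fin n))⟫ = 0 := by
      rw [inner_smul_right, hwo]; simp
    have := re_zero _ hw' hwo'
    rw [map_smul, inner_smul_right] at this
    simpa using this
  exact Complex.ext (re_zero w hw hwo) him

lemma exists_unit_orth {n : ℕ} (hn : 2 ≤ n) (x0 : EuclideanSpace ℂ (Fin n))
    (hx0 : x0 ≠ 0) : ∃ xp : EuclideanSpace ℂ (Fin n), ‖xp‖ = 1 ∧ ⟪x0, xp⟫ = (0:ℂ) := by
  set K := (ℂ ∙ x0)ᗮ with hK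
  have h1 : Module.finrank ℂ (ℂ ∙ x0 : Submodule ℂ (EuclideanSpace ℂ (Fin n))) = 1 :=
    finrank_span_singleton hx0
  have h2 := Submodule.finrank_add_finrank_orthogonal
    (K := (ℂ ∙ x0 : Submodule ℂ (EuclideanSpace ℂ (Fin n))))
  rw [h1, finrank_euclideanSpace_fin] at h2
  have hKne : K ≠ ⊥ := by
    intro hbot
    rw [hK] at hbot
    rw [hbot, finrank_bot] at h2
    omega
  obtain ⟨v, hvK, hv0⟩ := Submodule.exists_mem_ne_zero_of_ne_bot hKne
  have hvnorm : ‖v‖ ≠ 0 := norm_ne_zero_iff.mpr hv0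
  refine ⟨((‖v‖ : ℂ))⁻¹ • v, ?_, ?_⟩
  · rw [norm_smul]; simp [hvnorm]
  · rw [inner_smul_right]
    have : ⟪x0, v⟫ = 0 := Submodule.mem_orthogonal_singleton_iff_inner_right.mp hvK
    rw [this, mul_zero]

lemma frobenius_sum {n : ℕ} (x0 xnull : EuclideanSpace ℂ (Fin n))
    (hx0 : ‖x0‖ = 1) (hxnull : ‖xnull‖ = 1) (c : ℝ)
    (hinner : ⟪x0, xnull⟫ = (c : ℂ)) :
    (∑ i, ∑ j, (norm
        (x0 i * (starRingEnd ℂ) (x0 j) - xnull i * (starRingEnd ℂ) (xnull j))) ^ 2)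
      = 2 - 2 * c ^ 2 := by
  have key : ∀ i j : Fin n,
      (norm (x0 i * conj (x0 j) - xnull i * conj (xnull j))) ^ 2
      = ((conj (x0 i) * x0 i) * (conj (x0 j) * x0 j)
        + (conj (xnull i) * xnull i) * (conj (xnull j) * xnull j)
        - (conj (xnull i) * x0 i) * (conj (x0 j) * xnull j)
        - (conj (x0 i) * xnull i) * (conj (xnull j) * x0 j)).re := by
    intro i j
    rw [Complex.sq_norm, Complex.normSq_apply]
    set z := x0 i * conj (x0 j) - xnull i * conj (xnull j) with hz
    have : (z * conj z).re = z.re * z.re + z.im * z.im := by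
      simp [Complex.mul_re, Complex.conj_re, Complex.conj_im]
      try ring
    rw [← this]
    congr 1
    rw [hz]
    simp only [map_sub, map_mul, Complex.conj_conj]
    ring
  have hQ : (∑ i, conj (x0 i) * x0 i) = (1:ℂ) := by
    have : ⟪x0, x0⟫ = ((1:ℝ) : ℂ) := by
      rw [inner_self_eq_norm_sq_to_K (𝕜 := ℂ), hx0]; norm_num
    rw [← Complex.ofReal_one, ← this, PiLp.inner_apply]
    exact Finset.sum_congr rfl fun i _ => by rw [RCLike.inner_apply]; ring
  have hR : (∑ i, conj (xnull i) * xnull i) = (1:ℂ) := by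
    have : ⟪xnull, xnull⟫ = ((1:ℝ) : ℂ) := by
      rw [inner_self_eq_norm_sq_to_K (𝕜 := ℂ), hxnull]; norm_num
    rw [← Complex.ofReal_one, ← this, PiLp.inner_apply]
    exact Finset.sum_congr rfl fun i _ => by rw [RCLike.inner_apply]; ring
  have hP : (∑ i, conj (x0 i) * xnull i) = (c : ℂ) := by
    rw [← hinner, PiLp.inner_apply]
    exact Finset.sum_congr rfl fun i _ => by rw [RCLike.inner_apply]; ring
  have hP' : (∑ i, conj (xnull i) * x0 i) = (c : ℂ) := by
    have h := inner_conj_symm (𝕜 := ℂ) x0 xnull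
    rw [hinner] at h
    have h2 : ⟪xnull, x0⟫ = (c:ℂ) := by
      calc ⟪xnull, x0⟫ = conj (conj ⟪xnull, x0⟫) := (Complex.conj_conj _).symm
        _ = conj ((c:ℂ)) := by rw [h]
        _ = (c:ℂ) := Complex.conj_ofReal c
    rw [← h2, PiLp.inner_apply]
    exact Finset.sum_congr rfl fun i _ => by rw [RCLike.inner_apply]; ring
  calc (∑ i, ∑ j, (norm
        (x0 i * (starRingEnd ℂ) (x0 j) - xnull i * (starRingEnd ℂ) (xnull j))) ^ 2)
      = (∑ i, ∑ j, ((conj (x0 i) * x0 i) * (conj (x0 j) * x0 j)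
        + (conj (xnull i) * xnull i) * (conj (xnull j) * xnull j)
        - (conj (xnull i) * x0 i) * (conj (x0 j) * xnull j)
        - (conj (x0 i) * xnull i) * (conj (xnull j) * x0 j)).re) := by
        refine Finset.sum_congr rfl fun i _ => Finset.sum_congr rfl fun j _ => key i j
    _ = ((∑ i, ∑ j, ((conj (x0 i) * x0 i) * (conj (x0 j) * x0 j)
        + (conj (xnull i) * xnull i) * (conj (xnull j) * xnull j)
        - (conj (xnull i) * x0 i) * (conj (x0 j) * xnull j)
        - (conj (x0 i) * xnull i) * (conj (xnull j) * x0 j)))).re := by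
        rw [Complex.re_sum]
        refine Finset.sum_congr rfl fun i _ => ?_
        rw [Complex.re_sum]
    _ = ((∑ i, conj (x0 i) * x0 i) * (∑ j, conj (x0 j) * x0 j)
        + (∑ i, conj (xnull i) * xnull i) * (∑ j, conj (xnull j) * xnull j)
        - (∑ i, conj (xnull i) * x0 i) * (∑ j, conj (x0 j) * xnull j)
        - (∑ i, conj (x0 i) * xnull i) * (∑ j, conj (xnull j) * x0 j)).re := by
        congr 1
        simp only [Finset.sum_sub_distrib, Finset.sum_add_distrib, ← Finset.sum_mul,
          ← Finset.mul_sum]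
    _ = 2 - 2 * c ^ 2 := by
        rw [hQ, hR, hP, hP']
        rw [show (1*1 + 1*1 - (c:ℂ)*(c:ℂ) - (c:ℂ)*(c:ℂ)) = ((2 - 2*c^2 : ℝ) : ℂ) by
          push_cast; ring]
        exact Complex.ofReal_re _

set_option maxHeartbeats 1000000 in
/-- accuracy of the null vector. Let `n ≥ 2`, `M : ℂ^n → ℂ^m` linear,
`x0` a unit vector, and `x_null` a unit minimizer of `‖M x‖` over the unit sphere,
phase-adjusted so that `x0^* x_null ≥ 0` is real. Then there is a unit vector `x_⊥`
orthogonal to `x0` with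
`(1/4)·‖x0 x0^* - x_null x_null^*‖_F² · ‖M x_⊥‖² ≤ ‖M x0‖²`, where the squared
Frobenius norm is `∑ i j, |x0 i conj(x0 j) - x_null i conj(x_null j)|²`. -/
theorem null_vector_accuracy {n m : ℕ} (hn : 2 ≤ n)
    (M : EuclideanSpace ℂ (Fin n) →ₗ[ℂ] EuclideanSpace ℂ (Fin m))
    (x0 xnull : EuclideanSpace ℂ (Fin n))
    (hx0 : ‖x0‖ = 1) (hxnull : ‖xnull‖ = 1)
    (hmin : ∀ x : EuclideanSpace ℂ (Fin n), ‖x‖ = 1 → ‖M xnull‖ ≤ ‖M x‖)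
    (hphase_im : (inner ℂ x0 xnull : ℂ).im = 0)
    (hphase_re : 0 ≤ (inner ℂ x0 xnull : ℂ).re) :
    ∃ xp : EuclideanSpace ℂ (Fin n), ‖xp‖ = 1 ∧ (inner ℂ x0 xp : ℂ) = 0 ∧
      (1/4) * (∑ i, ∑ j, (norm
          (x0 i * (starRingEnd ℂ) (x0 j) - xnull i * (starRingEnd ℂ) (xnull j))) ^ 2) *
        ‖M xp‖ ^ 2 ≤ ‖M x0‖ ^ 2 := by
  have hx0ne : x0 ≠ 0 := by
    intro h; rw [h, norm_zero] at hx0; norm_num at hx0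
  set c : ℝ := (inner ℂ x0 xnull : ℂ).re with hc
  have hinner : (inner ℂ x0 xnull : ℂ) = (c:ℂ) :=
    Complex.ext (by rw [Complex.ofReal_re]) (by rw [Complex.ofReal_im, hphase_im])
  have hinner' : (inner ℂ xnull x0 : ℂ) = (c:ℂ) := by
    have h := inner_conj_symm (𝕜 := ℂ) x0 xnull
    rw [hinner] at h
    calc (inner ℂ xnull x0 : ℂ) = conj (conj (inner ℂ xnull x0 : ℂ)) := (Complex.conj_conj _).symm
      _ = conj ((c:ℂ)) := by rw [h]
      _ = (c:ℂ) := Complex.conj_ofReal c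
  have hsum := frobenius_sum x0 xnull hx0 hxnull c hinner
  have hc0 : 0 ≤ c := hphase_re
  have hc1 : c ≤ 1 := by
    have h := norm_inner_le_norm (𝕜 := ℂ) x0 xnull
    rw [hx0, hxnull] at h
    have h2 := Complex.re_le_norm (inner ℂ x0 xnull : ℂ)
    linarith [h, h2]
  have hx0x0 : (inner ℂ x0 x0 : ℂ) = 1 := by
    rw [inner_self_eq_norm_sq_to_K (𝕜 := ℂ), hx0]; norm_num
  have hnn : (inner ℂ xnull xnull : ℂ) = 1 := by
    rw [inner_self_eq_norm_sq_to_K (𝕜 := ℂ), hxnull]; norm_num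
  rcases eq_or_lt_of_le hc1 with hceq | hclt
  · obtain ⟨xp, h1, h2⟩ := exists_unit_orth hn x0 hx0ne
    refine ⟨xp, h1, h2, ?_⟩
    rw [hsum, hceq]
    have hz : (1:ℝ)/4 * (2 - 2*(1:ℝ)^2) * ‖M xp‖^2 = 0 := by ring
    rw [hz]
    positivity
  · set s : ℝ := Real.sqrt (1 - c^2) with hs
    have hs2 : s^2 = 1 - c^2 := Real.sq_sqrt (by nlinarith)
    have hs0 : 0 < s := Real.sqrt_pos.mpr (by nlinarith)
    have hsne : ((s:ℂ)) ≠ 0 := Complex.ofReal_ne_zero.mpr hs0.ne'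
    have hcs : c^2 + s^2 = 1 := by rw [hs2]; ring
    have hcs' : ((c:ℂ))^2 + ((s:ℂ))^2 = 1 := by
      rw [← Complex.ofReal_pow, ← Complex.ofReal_pow, ← Complex.ofReal_add, hcs,
        Complex.ofReal_one]
    set y : EuclideanSpace ℂ (Fin n) := xnull - (c:ℂ) • x0 with hy
    have hynorm2 : ‖y‖^2 = s^2 := by
      rw [hy, norm_sub_sq (𝕜 := ℂ), inner_smul_right, hinner', hxnull, norm_smul, hx0]
      rw [hs2]
      simp [Complex.norm_real, ← Complex.ofReal_mul]
      ring
    have hynorm : ‖y‖ = s := by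
      rw [← Real.sqrt_sq (norm_nonneg y), hynorm2, Real.sqrt_sq hs0.le]
    set xp : EuclideanSpace ℂ (Fin n) := ((s:ℂ))⁻¹ • y with hxp
    have hxpnorm : ‖xp‖ = 1 := by
      rw [hxp, norm_smul, hynorm, norm_inv, Complex.norm_real, Real.norm_eq_abs,
        abs_of_pos hs0]
      field_simp
    have hsxp : (s:ℂ) • xp = y := by
      rw [hxp, smul_inv_smul₀ hsne]
    have hxporth : (inner ℂ x0 xp : ℂ) = 0 := by
      rw [hxp, inner_smul_right, hy, inner_sub_right, inner_smul_right, hinner, hx0x0]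
      simp
    have hnull_eq : xnull = (c:ℂ) • x0 + (s:ℂ) • xp := by
      rw [hsxp, hy]; abel
    set w : EuclideanSpace ℂ (Fin n) := (s:ℂ) • x0 - (c:ℂ) • xp with hwdef
    have hwnorm2 : ‖w‖^2 = 1 := by
      rw [hwdef, norm_sub_sq (𝕜 := ℂ), inner_smul_left, inner_smul_right, hxporth,
        norm_smul, norm_smul, hx0, hxpnorm]
      simp only [mul_zero, mul_one, map_zero, Complex.norm_real, Real.norm_eq_abs, sq_abs]
      linarith [hcs]
    have hwnorm : ‖w‖ = 1 := by
      rw [← Real.sqrt_sq (norm_nonneg w), hwnorm2, Real.sqrt_one]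
    have hxnxp : (inner ℂ xnull xp : ℂ) = (s:ℂ) := by
      rw [hxp, inner_smul_right, hy, inner_sub_right, inner_smul_right, hnn, hinner']
      rw [show (1 - (c:ℂ) * (c:ℂ)) = ((s:ℂ))^2 by
        rw [← hcs']; push_cast; ring]
      field_simp
    have hworth : (inner ℂ xnull w : ℂ) = 0 := by
      rw [hwdef, inner_sub_right, inner_smul_right, inner_smul_right, hinner', hxnxp]
      ring
    have hr := min_orth M xnull hxnull hmin w hwnorm hworth
    have hx0_eq : x0 = (c:ℂ) • xnull + (s:ℂ) • w := by
      rw [hwdef, hnull_eq]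
      conv_lhs => rw [← one_smul ℂ x0, ← hcs']
      module
    have hxp_eq : xp = (s:ℂ) • xnull - (c:ℂ) • w := by
      rw [hwdef, hnull_eq]
      conv_lhs => rw [← one_smul ℂ xp, ← hcs']
      module
    have hMx0 : ‖M x0‖^2 = c^2 * ‖M xnull‖^2 + s^2 * ‖M w‖^2 := by
      conv_lhs => rw [hx0_eq]
      rw [map_add, map_smul, map_smul, norm_add_sq (𝕜 := ℂ), inner_smul_left,
        inner_smul_right, hr, norm_smul, norm_smul]
      simp only [mul_zero, mul_one, map_zero, add_zero, Complex.norm_real,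
        Real.norm_eq_abs]
      rw [mul_pow, mul_pow, sq_abs, sq_abs]
    have hMxp : ‖M xp‖^2 = s^2 * ‖M xnull‖^2 + c^2 * ‖M w‖^2 := by
      conv_lhs => rw [hxp_eq]
      rw [map_sub, map_smul, map_smul, norm_sub_sq (𝕜 := ℂ), inner_smul_left,
        inner_smul_right, hr, norm_smul, norm_smul]
      simp only [mul_zero, mul_one, map_zero, sub_zero, Complex.norm_real,
        Real.norm_eq_abs]
      rw [mul_pow, mul_pow, sq_abs, sq_abs]
    have hABle : ‖M xnull‖^2 ≤ ‖M w‖^2 :=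
      pow_le_pow_left₀ (norm_nonneg _) (hmin w hwnorm) 2
    have hA0 : (0:ℝ) ≤ ‖M xnull‖^2 := sq_nonneg _
    clear_value c s y xp w
    refine ⟨xp, hxpnorm, hxporth, ?_⟩
    rw [hsum, hMxp, hMx0, hs2]
    have key1 : (0:ℝ) ≤ (1 + c^2)/2 * ‖M xnull‖^2 := by positivity
    have key2 : (0:ℝ) ≤ (1 - c^2) * (1 - c^2/2) * (‖M w‖^2 - ‖M xnull‖^2) := by
      have h1 : (0:ℝ) ≤ 1 - c^2 := by rw [← hs2]; exact sq_nonneg s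
      have h2 : (0:ℝ) ≤ 1 - c^2/2 := by linarith
      have h3 : (0:ℝ) ≤ ‖M w‖^2 - ‖M xnull‖^2 := by linarith
      positivity
    have expand : c^2 * ‖M xnull‖^2 + (1 - c^2) * ‖M w‖^2
        - 1/4 * (2 - 2*c^2) * ((1 - c^2) * ‖M xnull‖^2 + c^2 * ‖M w‖^2)
        = (1 + c^2)/2 * ‖M xnull‖^2
          + (1 - c^2) * (1 - c^2/2) * (‖M w‖^2 - ‖M xnull‖^2) := by ring
    linarith [key1, key2, expand]
end

section
/- Let X_1, …, X_N be i.i.d. real random variables, each with the exponential distribution of rate 1/2 (density (1/2) e^{−z/2} on [0,∞)). Let m be an integer with 1 ≤ m < N and set τ* = −2 ln(1 − m/N). Then for every δ > 0, the probability that more than N − m of the X_i exceed τ* + δ is at most exp( −(N/2) · δ² · e^{−δ} · (1 − m/N)² ); equivalently, with probability at least 1 − exp( −(N/2) δ² e^{−δ} (1 − m/N)² ), at least m of the values X_1, …, X_N are ≤ τ* + δ (i.e. the m-th smallest order statistic is ≤ τ* + δ). -/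
open MeasureTheory ProbabilityTheory Real

lemma bern_mgf_le (p : ℝ) (hp0 : 0 ≤ p) (hp1 : p ≤ 1) (t : ℝ) (ht : 0 ≤ t) :
    1 - p + p * Real.exp t ≤ Real.exp (p * t + t ^ 2 / 8) := by
  have hD : ∀ x : ℝ, 0 < 1 - p + p * Real.exp x := by
    intro x
    rcases eq_or_lt_of_le hp1 with rfl | h
    · simpa using Real.exp_pos x
    · have := mul_nonneg hp0 (Real.exp_pos x).le
      linarith
  set g : ℝ → ℝ := fun x =>
    p + x / 4 - p * Real.exp x / (1 - p + p * Real.exp x) with hgdef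
  have h2 : ∀ x : ℝ, HasDerivAt (fun x => 1 - p + p * Real.exp x) (p * Real.exp x) x := by
    intro x
    exact ((Real.hasDerivAt_exp x).const_mul p).const_add (1 - p)
  have hgderiv : ∀ x : ℝ, HasDerivAt g
      (1 / 4 - (p * Real.exp x * (1 - p + p * Real.exp x) -
        p * Real.exp x * (p * Real.exp x)) / (1 - p + p * Real.exp x) ^ 2) x := by
    intro x
    have h1 : HasDerivAt (fun x => p * Real.exp x) (p * Real.exp x) x :=
      (Real.hasDerivAt_exp x).const_mul p
    have h3 := h1.div (h2 x) (hD x).ne'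
    have h4 : HasDerivAt (fun x : ℝ => p + x / 4) (1 / 4) x :=
      ((hasDerivAt_id x).div_const 4).const_add p
    exact h4.sub h3
  have hgd_nonneg : ∀ x : ℝ,
      0 ≤ 1 / 4 - (p * Real.exp x * (1 - p + p * Real.exp x) -
        p * Real.exp x * (p * Real.exp x)) / (1 - p + p * Real.exp x) ^ 2 := by
    intro x
    have hd := hD x
    rw [sub_nonneg, div_le_iff₀ (by positivity)]
    nlinarith [sq_nonneg (1 - p - p * Real.exp x)]
  have hgmono : Monotone g :=
    monotone_of_hasDerivAt_nonneg hgderiv (fun x => hgd_nonneg x)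
  have hg0 : g 0 = 0 := by
    simp only [hgdef, Real.exp_zero, mul_one]
    have : 1 - p + p = 1 := by ring
    rw [this]
    ring
  have hgnn : ∀ x : ℝ, 0 ≤ x → 0 ≤ g x := fun x hx => hg0 ▸ hgmono hx
  set f : ℝ → ℝ := fun x => p * x + x ^ 2 / 8 - Real.log (1 - p + p * Real.exp x) with hfdef
  have hfderiv : ∀ x : ℝ, HasDerivAt f (g x) x := by
    intro x
    have hA : HasDerivAt (fun x : ℝ => p * x) p x := by
      simpa using (hasDerivAt_id x).const_mul p
    have hB : HasDerivAt (fun x : ℝ => x ^ 2 / 8) (x / 4) x := by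
      have := (hasDerivAt_pow 2 x).div_const 8
      exact this.congr_deriv (by norm_num; ring)
    have hC : HasDerivAt (fun x => Real.log (1 - p + p * Real.exp x))
        (p * Real.exp x / (1 - p + p * Real.exp x)) x := (h2 x).log (hD x).ne'
    exact (hA.add hB).sub hC
  have hfmono : MonotoneOn f (Set.Ici (0:ℝ)) := by
    refine monotoneOn_of_deriv_nonneg (convex_Ici 0)
      (Differentiable.continuous fun x => (hfderiv x).differentiableAt).continuousOn
      (Differentiable.differentiableOn fun x => (hfderiv x).differentiableAt) ?_
    intro x hx
    rw [interior_Ici] at hx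
    rw [(hfderiv x).deriv]
    exact hgnn x (le_of_lt hx)
  have hf0 : f 0 = 0 := by
    simp only [hfdef, Real.exp_zero, mul_one, mul_zero]
    have : 1 - p + p = 1 := by ring
    rw [this]
    simp
  have hft : 0 ≤ f t := by
    rw [← hf0]
    exact hfmono Set.self_mem_Ici ht ht
  have : Real.log (1 - p + p * Real.exp t) ≤ p * t + t ^ 2 / 8 := by
    simp only [hfdef] at hft; linarith
  exact (Real.log_le_iff_le_exp (hD t)).mp this

lemma expo_aux (Nr q E d p t ed : ℝ) (hN : 0 ≤ Nr) (hq : 0 ≤ q) (hE : 0 ≤ E)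
    (hdE : 0 ≤ d * E) (h1 : d * E ≤ 2 * (1 - E)) (hp : p = q * E) (ht : t = 4 * (q - p))
    (he : ed = E ^ 2) :
    -t * (Nr * q + 1) + Nr * (p * t + t ^ 2 / 8) ≤ -(Nr/2) * d^2 * ed * q^2 := by
  subst hp ht he
  have h2 : (d * E) * (d * E) ≤ (2 * (1 - E)) * (2 * (1 - E)) :=
    mul_self_le_mul_self hdE h1
  have hE1 : 0 ≤ 1 - E := by nlinarith
  have T : 0 ≤ Nr * q^2 * ((2 * (1 - E))^2 - (d * E)^2) := by
    apply mul_nonneg (mul_nonneg hN (sq_nonneg q))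
    nlinarith
  have S : 0 ≤ q * (1 - E) := mul_nonneg hq hE1
  nlinarith [T, S]

/-- order-statistic tail bound for i.i.d. exponential(rate 1/2) variables.
With `τ* = -2 ln(1 - m/N)` and any `δ > 0`, the probability that more than `N - m` of
the `X i` exceed `τ* + δ` is at most `exp(-(N/2) δ² e^{-δ} (1 - m/N)²)`. -/
theorem exponential_order_statistic_bound {Ω : Type*} [MeasurableSpace Ω]
    (μ : Measure Ω) [IsProbabilityMeasure μ]
    (N m : ℕ) (hm1 : 1 ≤ m) (hmN : m < N)
    (X : Fin N → Ω → ℝ) (hmeas : ∀ i, Measurable (X i))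
    (hindep : iIndepFun X μ)
    (hlaw : ∀ i t, (0:ℝ) ≤ t →
      μ {ω | X i ω ≤ t} = ENNReal.ofReal (1 - Real.exp (-t/2)))
    (τstar : ℝ) (hτ : τstar = -2 * Real.log (1 - (m : ℝ)/(N : ℝ)))
    (δ : ℝ) (hδ : 0 < δ) :
    μ {ω | (N - m : ℕ) <
        (Finset.univ.filter fun i => τstar + δ < X i ω).card} ≤
      ENNReal.ofReal
        (Real.exp (-((N : ℝ)/2) * δ^2 * Real.exp (-δ) * (1 - (m : ℝ)/(N : ℝ))^2)) := by
  have hN0 : (0:ℝ) < N := by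
    have : 0 < N := lt_of_le_of_lt (Nat.zero_le m) hmN
    exact_mod_cast this
  have hmN' : (m:ℝ) < N := by exact_mod_cast hmN
  have hm0 : (0:ℝ) < m := by exact_mod_cast hm1
  set q : ℝ := 1 - (m:ℝ)/(N:ℝ) with hqdef
  have hq0 : 0 < q := by
    have : (m:ℝ)/(N:ℝ) < 1 := (div_lt_one hN0).mpr hmN'
    simp only [hqdef]; linarith
  have hq1 : q ≤ 1 := by
    have : 0 < (m:ℝ)/(N:ℝ) := by positivity
    simp only [hqdef]; linarith
  set E : ℝ := Real.exp (-δ/2) with hEdef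
  have hE0 : 0 < E := Real.exp_pos _
  have hE1 : E < 1 := by
    rw [hEdef, ← Real.exp_zero]
    exact Real.exp_lt_exp.mpr (by linarith)
  set p : ℝ := q * E with hpdef
  have hp0 : 0 ≤ p := by positivity
  have hp1 : p ≤ 1 := by
    have := mul_le_one₀ hq1 hE0.le hE1.le
    simpa [hpdef] using this
  set c : ℝ := τstar + δ with hcdef
  have hc0 : (0:ℝ) ≤ c := by
    have hlogq : Real.log q ≤ 0 := Real.log_nonpos hq0.le hq1
    have : 0 ≤ τstar := by rw [hτ]; nlinarith
    simp only [hcdef]; linarith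
  -- probability of exceeding c
  have hPa : ∀ i, μ {ω | c < X i ω} = ENNReal.ofReal p := by
    intro i
    have hset : {ω | c < X i ω} = {ω | X i ω ≤ c}ᶜ := by
      ext ω; simp [not_le]
    have hms : MeasurableSet {ω | X i ω ≤ c} := (hmeas i) measurableSet_Iic
    have hEc : Real.exp (-c/2) = p := by
      have h1 : -c/2 = Real.log q + (-δ/2) := by
        rw [hcdef, hτ]; ring
      rw [h1, Real.exp_add, Real.exp_log hq0, hpdef, hEdef]
    have hle1 : Real.exp (-c/2) ≤ 1 := by
      rw [hEc, hpdef]; nlinarith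
    rw [hset, measure_compl hms (measure_ne_top μ _), hlaw i c hc0, measure_univ]
    rw [← ENNReal.ofReal_one, ← ENNReal.ofReal_sub _ (by linarith)]
    rw [show (1:ℝ) - (1 - Real.exp (-c/2)) = Real.exp (-c/2) by ring, hEc]
  -- indicator variables
  set Y : Fin N → Ω → ℝ := fun i ω => if c < X i ω then 1 else 0 with hYdef
  have hYmeas : ∀ i, Measurable (Y i) := by
    intro i
    exact Measurable.ite (measurableSet_lt measurable_const (hmeas i))
      measurable_const measurable_const
  have hYindep : iIndepFun Y μ := by
    have hg : ∀ _i : Fin N, Measurable (fun z : ℝ => if c < z then (1:ℝ) else 0) :=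
      fun _ => Measurable.ite (measurableSet_lt measurable_const measurable_id)
        measurable_const measurable_const
    have := hindep.comp (fun _ (z : ℝ) => if c < z then (1:ℝ) else 0) hg
    exact this
  set t : ℝ := 4 * (q - p) with htdef
  have hqp : p < q := by
    rw [hpdef]
    nlinarith
  have ht : 0 ≤ t := by rw [htdef]; linarith
  have hmsA : ∀ i, MeasurableSet {ω | c < X i ω} :=
    fun i => measurableSet_lt measurable_const (hmeas i)
  have hrw : ∀ i, (fun ω => Real.exp (t * Y i ω)) =
      fun ω => Set.indicator {ω | c < X i ω} (fun _ => Real.exp t - 1) ω + 1 := by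
    intro i
    funext ω
    by_cases h : c < X i ω
    · simp [hYdef, h, Set.indicator_of_mem, Set.mem_setOf_eq]
    · simp [hYdef, h, Set.indicator_of_notMem, Set.mem_setOf_eq]
  have hint : ∀ i, Integrable (fun ω => Real.exp (t * Y i ω)) μ := by
    intro i
    rw [hrw i]
    exact ((integrable_const (Real.exp t - 1)).indicator (hmsA i)).add (integrable_const 1)
  have hmgfY : ∀ i, mgf (Y i) μ t = 1 - p + p * Real.exp t := by
    intro i
    rw [mgf, hrw i]
    rw [integral_add ((integrable_const (Real.exp t - 1)).indicator (hmsA i))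
      (integrable_const 1)]
    rw [integral_indicator_const _ (hmsA i), integral_const, measureReal_def, hPa i,
      ENNReal.toReal_ofReal hp0]
    simp [measure_univ]
    ring
  -- Chernoff
  have hint_sum : Integrable (fun ω => Real.exp (t * (∑ i, Y i) ω)) μ :=
    hYindep.integrable_exp_mul_sum hYmeas (fun i _ => hint i)
  have hcher := measure_ge_le_exp_mul_mgf (μ := μ) (X := ∑ i, Y i)
    ((N:ℝ) * q + 1) ht hint_sum
  have hmgf : mgf (∑ i, Y i) μ t = (1 - p + p * Real.exp t) ^ N := by
    rw [hYindep.mgf_sum hYmeas]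
    simp only [hmgfY]
    simp [Finset.prod_const, Finset.card_univ]
  -- event inclusion
  have hsub : {ω | (N - m : ℕ) <
      (Finset.univ.filter fun i => τstar + δ < X i ω).card} ⊆
      {ω | (N:ℝ) * q + 1 ≤ (∑ i, Y i) ω} := by
    intro ω hω
    simp only [Set.mem_setOf_eq] at hω ⊢
    have hsum : (∑ i, Y i) ω =
        ((Finset.univ.filter fun i => c < X i ω).card : ℝ) := by
      simp only [Finset.sum_apply, hYdef]
      rw [Finset.sum_boole]
    have hNm : ((N - m : ℕ) : ℝ) = (N:ℝ) * q := by
      rw [Nat.cast_sub hmN.le, hqdef]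
      field_simp
    have hcard : ((N - m : ℕ) : ℝ) + 1 ≤
        ((Finset.univ.filter fun i => c < X i ω).card : ℝ) := by
      have : (N - m : ℕ) + 1 ≤ (Finset.univ.filter fun i => c < X i ω).card := by
        simpa [hcdef] using Nat.succ_le_of_lt hω
      exact_mod_cast this
    rw [hsum]
    linarith [hcard, hNm.symm.le, hNm.le]
  -- scalar estimate
  have hbern := bern_mgf_le p hp0 hp1 t ht
  have hbase0 : (0:ℝ) ≤ 1 - p + p * Real.exp t := by
    have := Real.exp_pos t
    nlinarith
  have hpowle : (1 - p + p * Real.exp t) ^ N ≤ Real.exp (p * t + t ^ 2 / 8) ^ N :=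
    pow_le_pow_left₀ hbase0 hbern N
  have hexpow : Real.exp (p * t + t ^ 2 / 8) ^ N =
      Real.exp ((N:ℝ) * (p * t + t ^ 2 / 8)) := by
    rw [← Real.exp_nat_mul]
  have hkey : δ/2 + 1 ≤ Real.exp (δ/2) := Real.add_one_le_exp _
  have hEE : Real.exp (δ/2) * E = 1 := by
    rw [hEdef, ← Real.exp_add]; ring_nf; exact Real.exp_zero
  have h1 : δ * E ≤ 2 * (1 - E) := by nlinarith
  have h2 : (δ * E) ^ 2 ≤ (2 * (1 - E)) ^ 2 :=
    pow_le_pow_left₀ (by positivity) h1 2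
  have hexpδ : Real.exp (-δ) = E ^ 2 := by
    rw [hEdef, sq, ← Real.exp_add]
    norm_num
  have hexpo : -t * ((N:ℝ) * q + 1) + (N:ℝ) * (p * t + t ^ 2 / 8) ≤
      -((N:ℝ)/2) * δ^2 * Real.exp (-δ) * q^2 :=
    expo_aux (N:ℝ) q E δ p t (Real.exp (-δ)) hN0.le hq0.le hE0.le (by positivity) h1
      hpdef htdef hexpδ
  have hfinal : Real.exp (-t * ((N:ℝ) * q + 1)) * mgf (∑ i, Y i) μ t ≤
      Real.exp (-((N:ℝ)/2) * δ^2 * Real.exp (-δ) * q^2) := by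
    rw [hmgf]
    calc Real.exp (-t * ((N:ℝ) * q + 1)) * (1 - p + p * Real.exp t) ^ N
        ≤ Real.exp (-t * ((N:ℝ) * q + 1)) * Real.exp (p * t + t ^ 2 / 8) ^ N := by
          exact mul_le_mul_of_nonneg_left hpowle (Real.exp_pos _).le
      _ = Real.exp (-t * ((N:ℝ) * q + 1) + (N:ℝ) * (p * t + t ^ 2 / 8)) := by
          rw [hexpow, ← Real.exp_add]
      _ ≤ Real.exp (-((N:ℝ)/2) * δ^2 * Real.exp (-δ) * q^2) :=
          Real.exp_le_exp.mpr hexpo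
  calc μ {ω | (N - m : ℕ) <
        (Finset.univ.filter fun i => τstar + δ < X i ω).card}
      ≤ μ {ω | (N:ℝ) * q + 1 ≤ (∑ i, Y i) ω} := measure_mono hsub
    _ = ENNReal.ofReal ((μ {ω | (N:ℝ) * q + 1 ≤ (∑ i, Y i) ω}).toReal) :=
        (ENNReal.ofReal_toReal (measure_ne_top μ _)).symm
    _ ≤ ENNReal.ofReal (Real.exp (-t * ((N:ℝ) * q + 1)) * mgf (∑ i, Y i) μ t) :=
        ENNReal.ofReal_le_ofReal hcher
    _ ≤ ENNReal.ofReal (Real.exp (-((N:ℝ)/2) * δ^2 * Real.exp (-δ) * q^2)) :=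
        ENNReal.ofReal_le_ofReal hfinal
end
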